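/- If any two disjoint cozero sets of a Tychonoff space X can be separated by a clopen set, then X is a U-space: for every f ∈ C(X) there is a unit u ∈ C(X) with f = |f|·u. -/

import Mathlib

open Classical in
/-- If any two disjoint cozero sets of `X` can be separated by a clopen set, then
`X` is a U-space: every `f ∈ C(X)` is `|f|` times a unit. -/
theorem uSpace_of_clopen_separation {X : Type*} [TopologicalSpace X]
    [CompletelyRegularSpace X] [T1Space X]
    (hsep : ∀ f g : C(X, ℝ), {x : X | f x ≠ 0} ∩ {x : X | g x ≠ 0} = ∅ →
      ∃ D : Set X, IsClopen D ∧ {x : X | f x ≠ 0} ⊆ D ∧ {x : X | g x ≠ 0} ⊆ Dᶜ) :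
    ∀ f : C(X, ℝ), ∃ u : C(X, ℝ), IsUnit u ∧ f = |f| * u := by
  intro f
  obtain ⟨D, hD, hpos, hneg⟩ := hsep (f ⊔ 0) ((-f) ⊔ 0) (by
    ext x
    simp only [Set.mem_inter_iff, Set.mem_setOf_eq, Set.mem_empty_iff_false, iff_false,
      not_and, not_not, ContinuousMap.sup_apply, ContinuousMap.zero_apply,
      ContinuousMap.neg_apply]
    intro h1
    rcases le_or_gt (f x) 0 with h | h
    · exact absurd (sup_eq_right.mpr h) h1
    · simp [sup_eq_right.mpr (neg_nonpos.mpr h.le)])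
  have hcont : Continuous fun x : X => if x ∈ D then (1 : ℝ) else -1 := by
    apply Continuous.if _ continuous_const continuous_const
    intro a ha
    rw [show {x : X | x ∈ D} = D from rfl, hD.frontier_eq] at ha
    exact ha.elim
  have hP : ∀ x, x ∈ D → 0 ≤ f x := by
    intro x hx
    by_contra h
    push_neg at h
    refine hneg ?_ hx
    show (-f ⊔ 0) x ≠ 0
    simp only [ContinuousMap.sup_apply, ContinuousMap.neg_apply, ContinuousMap.zero_apply]
    exact ne_of_gt (lt_sup_iff.mpr (Or.inl (neg_pos.mpr h)))
  have hN : ∀ x, x ∉ D → f x ≤ 0 := by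
    intro x hx
    by_contra h
    push_neg at h
    refine hx (hpos ?_)
    show (f ⊔ 0) x ≠ 0
    simp only [ContinuousMap.sup_apply, ContinuousMap.zero_apply]
    exact ne_of_gt (lt_sup_iff.mpr (Or.inl h))
  refine ⟨⟨_, hcont⟩, ?_, ?_⟩
  · refine IsUnit.of_mul_eq_one ⟨_, hcont⟩ ?_
    ext x
    simp only [ContinuousMap.mul_apply, ContinuousMap.coe_mk, ContinuousMap.one_apply]
    split <;> norm_num
  · ext x
    simp only [ContinuousMap.mul_apply, ContinuousMap.abs_apply, ContinuousMap.coe_mk]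
    split
    · next hx => rw [abs_of_nonneg (hP x hx)]; ring
    · next hx => rw [abs_of_nonpos (hN x hx)]; ring
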